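/- If G is a connected (n,k)-graph with k ≥ 1, then the minimum degree of G is at least n + k + 1. -/

import Mathlib

open Finset

/-- A graph `G` is `k`-extendable if it has a perfect matching and every matching
consisting of `k` pairwise disjoint edges extends to a perfect matching. -/
def SimpleGraph.IsKExtendable {V : Type*} [Fintype V] (G : SimpleGraph V) (k : ℕ) : Prop :=
  (∃ M : G.Subgraph, M.IsPerfectMatching) ∧
  ∀ M : G.Subgraph, M.IsMatching → M.edgeSet.ncard = k →
    ∃ P : G.Subgraph, P.IsPerfectMatching ∧ M ≤ P

/-- A graph `G` is an `(n,k)`-graph if `|G| ≥ n + 2k + 2`, `|G| ≡ n (mod 2)`, and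
deleting any `n` vertices leaves a `k`-extendable graph. -/
def SimpleGraph.IsNKGraph {V : Type*} [Fintype V] [DecidableEq V]
    (G : SimpleGraph V) (n k : ℕ) : Prop :=
  n + 2 * k + 2 ≤ Fintype.card V ∧ Fintype.card V % 2 = n % 2 ∧
  ∀ S : Finset V, S.card = n →
    SimpleGraph.IsKExtendable (G.induce ((Sᶜ : Finset V) : Set V)) k

namespace NK


variable {W : Type*} [Fintype W] [DecidableEq W]

/-- A finite set of edges of `Γ` that are pairwise disjoint. -/
def IsMSet (Γ : SimpleGraph W) (F : Finset (Sym2 W)) : Prop :=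
  (∀ e ∈ F, e ∈ Γ.edgeSet) ∧ ∀ e ∈ F, ∀ f ∈ F, e ≠ f → ∀ x, x ∈ e → x ∉ f

/-- support of an edge set -/
def msupp (F : Finset (Sym2 W)) : Finset W :=
  F.biUnion (fun e => univ.filter (· ∈ e))

lemma mem_msupp {F : Finset (Sym2 W)} {x : W} : x ∈ msupp F ↔ ∃ e ∈ F, x ∈ e := by
  simp [msupp]

lemma msupp_mono {F F' : Finset (Sym2 W)} (h : F ⊆ F') : msupp F ⊆ msupp F' := by
  intro x hx
  rw [mem_msupp] at *
  obtain ⟨e, he, hxe⟩ := hx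
  exact ⟨e, h he, hxe⟩

omit [Fintype W] [DecidableEq W] in
lemma IsMSet.subset {Γ : SimpleGraph W} {F F' : Finset (Sym2 W)} (h : IsMSet Γ F')
    (hsub : F ⊆ F') : IsMSet Γ F :=
  ⟨fun e he => h.1 e (hsub he), fun e he f hf hne x hx => h.2 e (hsub he) f (hsub hf) hne x hx⟩

omit [Fintype W] in
lemma IsMSet.eq_of_mem {Γ : SimpleGraph W} {F : Finset (Sym2 W)} (h : IsMSet Γ F)
    {e f : Sym2 W} {x : W} (he : e ∈ F) (hf : f ∈ F) (hxe : x ∈ e) (hxf : x ∈ f) : e = f := by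
  by_contra hne
  exact h.2 e he f hf hne x hxe hxf

omit [Fintype W] [DecidableEq W] in
lemma IsMSet.not_isDiag {Γ : SimpleGraph W} {F : Finset (Sym2 W)} (h : IsMSet Γ F)
    {e : Sym2 W} (he : e ∈ F) : ¬ e.IsDiag :=
  Γ.not_isDiag_of_mem_edgeSet (h.1 e he)

/-- partner of a vertex in a matching -/
noncomputable def pmate (F : Finset (Sym2 W)) (x : W) : W :=
  if h : ∃ e ∈ F, x ∈ e then Sym2.Mem.other' h.choose_spec.2 else x

lemma pmate_spec {F : Finset (Sym2 W)} {x : W} (h : x ∈ msupp F) :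
    s(x, pmate F x) ∈ F := by
  rw [mem_msupp] at h
  rw [pmate, dif_pos h]
  rw [Sym2.other_spec' h.choose_spec.2]
  exact h.choose_spec.1

lemma pmate_eq {Γ : SimpleGraph W} {F : Finset (Sym2 W)} (hF : IsMSet Γ F) {x y : W}
    (h : s(x, y) ∈ F) : pmate F x = y := by
  have hx : x ∈ msupp F := mem_msupp.mpr ⟨_, h, by simp⟩
  have h2 := pmate_spec hx
  have := hF.eq_of_mem (x := x) h2 h (by simp) (by simp)
  rw [Sym2.eq_iff] at this
  rcases this with ⟨-, h⟩ | ⟨h1, h2⟩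
  · exact h
  · rw [h2, h1]

lemma pmate_ne {Γ : SimpleGraph W} {F : Finset (Sym2 W)} (hF : IsMSet Γ F) {x : W}
    (h : x ∈ msupp F) : pmate F x ≠ x := by
  intro heq
  have h2 := pmate_spec h
  rw [heq] at h2
  exact hF.not_isDiag h2 (by simp)

lemma pmate_mem {F : Finset (Sym2 W)} {x : W} (h : x ∈ msupp F) :
    pmate F x ∈ msupp F := mem_msupp.mpr ⟨_, pmate_spec h, by simp⟩

lemma pmate_invol {Γ : SimpleGraph W} {F : Finset (Sym2 W)} (hF : IsMSet Γ F) {x : W}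
    (h : x ∈ msupp F) : pmate F (pmate F x) = x := by
  have := pmate_spec h
  rw [Sym2.eq_swap] at this
  exact pmate_eq hF this

lemma pmate_inj {Γ : SimpleGraph W} {F : Finset (Sym2 W)} (hF : IsMSet Γ F) {x y : W}
    (hx : x ∈ msupp F) (hy : y ∈ msupp F) (h : pmate F x = pmate F y) : x = y := by
  have := pmate_invol hF hx
  rw [h, pmate_invol hF hy] at this
  exact this.symm

lemma pmate_adj {Γ : SimpleGraph W} {F : Finset (Sym2 W)} (hF : IsMSet Γ F) {x : W}
    (h : x ∈ msupp F) : Γ.Adj x (pmate F x) :=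
  (SimpleGraph.mem_edgeSet Γ).mp (hF.1 _ (pmate_spec h))

/-- the unique edge at a vertex -/
lemma IsMSet.edge_eq {Γ : SimpleGraph W} {F : Finset (Sym2 W)} (hF : IsMSet Γ F)
    {e : Sym2 W} {x : W} (he : e ∈ F) (hx : x ∈ e) : e = s(x, pmate F x) := by
  have hxm : x ∈ msupp F := mem_msupp.mpr ⟨e, he, hx⟩
  exact hF.eq_of_mem he (pmate_spec hxm) hx (by simp)

lemma msupp_card {Γ : SimpleGraph W} {F : Finset (Sym2 W)} (hF : IsMSet Γ F) :
    (msupp F).card = 2 * F.card := by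
  rw [msupp, card_biUnion]
  · rw [Finset.sum_congr rfl (fun e he => ?_), Finset.sum_const, smul_eq_mul, mul_comm]
    · induction e with
      | _ a b =>
        have hab : a ≠ b := by
          intro h; exact hF.not_isDiag he (by simp [h])
        have : univ.filter (· ∈ s(a, b)) = {a, b} := by
          ext z; simp [Sym2.mem_iff]
        rw [this, card_insert_of_notMem (by simp [hab]), card_singleton]
  · intro e he f hf hne
    rw [Function.onFun_apply, Finset.disjoint_left]
    intro z hz hz2
    simp only [mem_filter] at hz hz2
    exact hF.2 e he f hf hne z hz.2 hz2.2



omit [Fintype W] [DecidableEq W] in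
lemma subgraph_matching_edge_eq {Γ : SimpleGraph W} {M : Γ.Subgraph} (hM : M.IsMatching)
    {e f : Sym2 W} {x : W} (he : e ∈ M.edgeSet) (hf : f ∈ M.edgeSet)
    (hxe : x ∈ e) (hxf : x ∈ f) : e = f := by
  induction e with
  | _ a b =>
    induction f with
    | _ c d =>
      rw [SimpleGraph.Subgraph.mem_edgeSet] at he hf
      rw [Sym2.mem_iff] at hxe hxf
      have unique : ∀ y z : W, M.Adj x y → M.Adj x z → y = z := by
        intro y z hy hz
        obtain ⟨u, -, hu⟩ := hM (M.edge_vert hy)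
        rw [hu y hy, hu z hz]
      rcases hxe with rfl | rfl <;> rcases hxf with rfl | rfl
      · rw [unique b d he hf]
      · rw [unique b c he hf.symm, Sym2.eq_swap]
      · rw [unique a d he.symm hf, Sym2.eq_swap]
      · rw [unique a c he.symm hf.symm]

/-- the subgraph associated to an edge set -/
def msetSub (Γ : SimpleGraph W) (F : Finset (Sym2 W)) (hF : IsMSet Γ F) : Γ.Subgraph where
  verts := ↑(msupp F)
  Adj a b := s(a, b) ∈ F
  adj_sub := fun h => (SimpleGraph.mem_edgeSet Γ).mp (hF.1 _ h)
  edge_vert := fun h => Finset.mem_coe.mpr (mem_msupp.mpr ⟨_, h, by simp⟩)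
  symm := ⟨fun a b h => by
    show s(b, a) ∈ F
    rwa [show s(b, a) = s(a, b) from Sym2.eq_swap]⟩

lemma msetSub_isMatching {Γ : SimpleGraph W} {F : Finset (Sym2 W)} (hF : IsMSet Γ F) :
    (msetSub Γ F hF).IsMatching := by
  intro v hv
  have hv' : v ∈ msupp F := Finset.mem_coe.mp hv
  refine ⟨pmate F v, pmate_spec hv', fun y hy => ?_⟩
  exact (pmate_eq hF hy).symm

lemma msetSub_edgeSet {Γ : SimpleGraph W} {F : Finset (Sym2 W)} (hF : IsMSet Γ F) :
    (msetSub Γ F hF).edgeSet = ↑F := by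
  ext e
  induction e with
  | _ a b =>
    rw [SimpleGraph.Subgraph.mem_edgeSet]
    exact Iff.rfl

/-- The fundamental trap: a matching of size `k` missing a vertex `z` all of whose
neighbours are covered contradicts `k`-extendability. -/
lemma trap {Γ : SimpleGraph W} {k : ℕ} (hext : Γ.IsKExtendable k) {F : Finset (Sym2 W)}
    (hF : IsMSet Γ F) (hcard : F.card = k) {z : W} (hz : z ∉ msupp F)
    (hnb : ∀ w, Γ.Adj z w → w ∈ msupp F) : False := by
  obtain ⟨P, hPM, hle⟩ := hext.2 (msetSub Γ F hF) (msetSub_isMatching hF)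
    (by rw [msetSub_edgeSet hF, Set.ncard_coe_finset, hcard])
  obtain ⟨w, hw, -⟩ := hPM.1 (hPM.2 z)
  have hΓ : Γ.Adj z w := P.adj_sub hw
  have hwF : w ∈ msupp F := hnb w hΓ
  have hPadj : P.Adj w (pmate F w) := hle.2 (pmate_spec hwF)
  obtain ⟨u, -, huniq⟩ := hPM.1 (P.edge_vert hPadj)
  have h1 := huniq _ hPadj
  have h2 := huniq _ hw.symm
  rw [← h2] at h1
  exact hz (h1 ▸ pmate_mem hwF)

/-- Pad a small matching to one of size exactly `k` using edges of a base matching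
avoiding the protected set `Z`. -/
lemma pad {Γ : SimpleGraph W} {k : ℕ} {F₀ Fb : Finset (Sym2 W)} {Z : Finset W}
    (hF₀ : IsMSet Γ F₀) (hFb : IsMSet Γ Fb) (hsupp : msupp F₀ ⊆ Z) (hcard : F₀.card ≤ k)
    (havail : k - F₀.card ≤ (Fb.filter (fun e => ∀ x ∈ e, x ∉ Z)).card) :
    ∃ F, IsMSet Γ F ∧ F.card = k ∧ F₀ ⊆ F ∧ ∀ x ∈ msupp F, x ∈ Z → x ∈ msupp F₀ := by
  obtain ⟨pads, hpads_sub, hpads_card⟩ := Finset.exists_subset_card_eq havail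
  have hpads_avoid : ∀ e ∈ pads, ∀ x ∈ e, x ∉ Z := by
    intro e he x hx
    exact (Finset.mem_filter.mp (hpads_sub he)).2 x hx
  have hpadsFb : pads ⊆ Fb := fun e he => Finset.mem_filter.mp (hpads_sub he) |>.1
  have hdisj : Disjoint F₀ pads := by
    rw [Finset.disjoint_left]
    intro e he hep
    induction e with
    | _ a b =>
      have : a ∈ msupp F₀ := mem_msupp.mpr ⟨_, he, by simp⟩
      exact hpads_avoid _ hep a (by simp) (hsupp this)
  refine ⟨F₀ ∪ pads, ⟨?_, ?_⟩, ?_, Finset.subset_union_left, ?_⟩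
  · intro e he
    rcases Finset.mem_union.mp he with h | h
    · exact hF₀.1 e h
    · exact hFb.1 e (hpadsFb h)
  · intro e he f hf hne x hxe hxf
    rcases Finset.mem_union.mp he with h1 | h1 <;> rcases Finset.mem_union.mp hf with h2 | h2
    · exact hF₀.2 e h1 f h2 hne x hxe hxf
    · exact hpads_avoid f h2 x hxf (hsupp (mem_msupp.mpr ⟨e, h1, hxe⟩))
    · exact hpads_avoid e h1 x hxe (hsupp (mem_msupp.mpr ⟨f, h2, hxf⟩))
    · exact hFb.2 e (hpadsFb h1) f (hpadsFb h2) hne x hxe hxf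
  · rw [Finset.card_union_of_disjoint hdisj, hpads_card]
    omega
  · intro x hx hxZ
    rcases mem_msupp.mp hx with ⟨e, he, hxe⟩
    rcases Finset.mem_union.mp he with h | h
    · exact mem_msupp.mpr ⟨e, h, hxe⟩
    · exact absurd hxZ (hpads_avoid e h x hxe)

/-- Extract a perfect matching as an edge set. -/
lemma exists_pm_finset {Γ : SimpleGraph W} {k : ℕ} (hext : Γ.IsKExtendable k) :
    ∃ F : Finset (Sym2 W), IsMSet Γ F ∧ msupp F = univ := by
  classical
  obtain ⟨M, hM⟩ := hext.1
  refine ⟨(Set.toFinite M.edgeSet).toFinset, ⟨?_, ?_⟩, ?_⟩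
  · intro e he
    rw [Set.Finite.mem_toFinset] at he
    exact M.edgeSet_subset he
  · intro e he f hf hne x hxe hxf
    rw [Set.Finite.mem_toFinset] at he hf
    exact hne (subgraph_matching_edge_eq hM.1 he hf hxe hxf)
  · ext x
    simp only [mem_univ, iff_true, mem_msupp]
    obtain ⟨w, hw, -⟩ := hM.1 (hM.2 x)
    exact ⟨s(x, w), by rwa [Set.Finite.mem_toFinset, SimpleGraph.Subgraph.mem_edgeSet], by simp⟩

-- neighbourhood as a Finset (classical)
open scoped Classical in
noncomputable def NB (Γ : SimpleGraph W) (y : W) : Finset W := univ.filter (Γ.Adj y)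

lemma mem_NB {Γ : SimpleGraph W} {y w : W} : w ∈ NB Γ y ↔ Γ.Adj y w := by
  simp [NB]

/-- a near-matching missing exactly `x` and `y` -/
def Near (Γ : SimpleGraph W) (x y : W) (F : Finset (Sym2 W)) : Prop :=
  IsMSet Γ F ∧ msupp F = univ \ {x, y}

open scoped Classical in
noncomputable def WsetF (Γ : SimpleGraph W) (x : W) : Finset W :=
  univ.filter (fun y => y ≠ x ∧ ∃ F, Near Γ x y F)

lemma mem_WsetF {Γ : SimpleGraph W} {x y : W} :
    y ∈ WsetF Γ x ↔ y ≠ x ∧ ∃ F, Near Γ x y F := by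
  simp [WsetF]

lemma Near.mem_supp {Γ : SimpleGraph W} {x y : W} {F : Finset (Sym2 W)}
    (hN : Near Γ x y F) {u : W} : u ∈ msupp F ↔ u ≠ x ∧ u ≠ y := by
  rw [hN.2]; simp

lemma Near.card_eq {Γ : SimpleGraph W} {x y : W} {F : Finset (Sym2 W)}
    (hN : Near Γ x y F) (hyx : y ≠ x) : 2 * F.card + 2 = Fintype.card W := by
  have h1 := msupp_card hN.1
  have h2 : ((univ : Finset W) \ {x, y}).card + ({x, y} : Finset W).card = Fintype.card W := by
    rw [Finset.card_sdiff_add_card_eq_card (Finset.subset_univ _), Finset.card_univ]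
  have h3 : ({x, y} : Finset W).card = 2 := by
    rw [Finset.card_insert_of_notMem (by simp [hyx.symm]), Finset.card_singleton]
  rw [hN.2] at h1
  omega

/-- flipping a near-matching along an edge from the exposed vertex -/
lemma near_flip {Γ : SimpleGraph W} {x y : W} {F : Finset (Sym2 W)}
    (hN : Near Γ x y F) (hyx : y ≠ x) {w : W} (hadj : Γ.Adj y w) (hwx : w ≠ x) :
    Near Γ x (pmate F w) (insert s(y, w) (F.erase s(w, pmate F w))) ∧
      pmate F w ≠ x ∧ pmate F w ≠ y := by
  have hwy : w ≠ y := hadj.ne'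
  have hwm : w ∈ msupp F := hN.mem_supp.mpr ⟨hwx, hwy⟩
  set z := pmate F w with hz
  have hzm : z ∈ msupp F := pmate_mem hwm
  have hzx : z ≠ x := (hN.mem_supp.mp hzm).1
  have hzy : z ≠ y := (hN.mem_supp.mp hzm).2
  have hzw : z ≠ w := pmate_ne hN.1 hwm
  have hxm : x ∉ msupp F := fun h => ((hN.mem_supp.mp h).1 rfl)
  have hym : y ∉ msupp F := fun h => ((hN.mem_supp.mp h).2 rfl)
  have hedge : s(w, z) ∈ F := pmate_spec hwm
  have hmset : IsMSet Γ (insert s(y, w) (F.erase s(w, z))) := by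
    constructor
    · intro e he
      rcases Finset.mem_insert.mp he with rfl | h
      · exact hadj
      · exact hN.1.1 e (Finset.erase_subset _ _ h)
    · intro e he f hf hne u hue huf
      rcases Finset.mem_insert.mp he with rfl | he' <;>
        rcases Finset.mem_insert.mp hf with rfl | hf'
      · exact hne rfl
      · -- e = s(y,w), f ∈ erase
        have hfF : f ∈ F := Finset.erase_subset _ _ hf'
        rcases Sym2.mem_iff.mp hue with rfl | rfl
        · exact hym (mem_msupp.mpr ⟨f, hfF, huf⟩)
        · have := hN.1.edge_eq hfF huf
          rw [← hz] at this
          exact (Finset.ne_of_mem_erase hf') this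
      · have heF : e ∈ F := Finset.erase_subset _ _ he'
        rcases Sym2.mem_iff.mp huf with rfl | rfl
        · exact hym (mem_msupp.mpr ⟨e, heF, hue⟩)
        · have := hN.1.edge_eq heF hue
          rw [← hz] at this
          exact (Finset.ne_of_mem_erase he') this
      · exact hN.1.2 e (Finset.erase_subset _ _ he') f (Finset.erase_subset _ _ hf') hne u hue huf
  refine ⟨⟨hmset, ?_⟩, hzx, hzy⟩
  have target : ∀ u : W, u ∈ (univ : Finset W) \ ({x, z} : Finset W) ↔ (u ≠ x ∧ u ≠ z) := by
    intro u; simp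
  ext u
  rw [mem_msupp, target u]
  constructor
  · rintro ⟨e, he, hue⟩
    rcases Finset.mem_insert.mp he with rfl | he'
    · rcases Sym2.mem_iff.mp hue with rfl | rfl
      · simp [hyx, hzy.symm]
      · simp [hwx, hzw.symm]
    · have heF : e ∈ F := Finset.erase_subset _ _ he'
      have hum : u ∈ msupp F := mem_msupp.mpr ⟨e, heF, hue⟩
      have hux : u ≠ x := (hN.mem_supp.mp hum).1
      have huz : u ≠ z := by
        rintro rfl
        have hzw' : pmate F z = w := by
          rw [show s(w, z) = s(z, w) from Sym2.eq_swap] at hedge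
          exact pmate_eq hN.1 hedge
        have heq2 := hN.1.edge_eq heF hue
        rw [hzw'] at heq2
        exact (Finset.ne_of_mem_erase he')
          (by rw [heq2, show s(z, w) = s(w, z) from Sym2.eq_swap])
      exact ⟨hux, huz⟩
  · rintro ⟨hux, huz⟩
    by_cases huy : u = y
    · exact ⟨s(y, w), by simp, by simp [huy]⟩
    by_cases huw : u = w
    · exact ⟨s(y, w), by simp, by simp [huw]⟩
    · have hum : u ∈ msupp F := hN.mem_supp.mpr ⟨hux, huy⟩
      obtain ⟨e, heF, hue⟩ := mem_msupp.mp hum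
      refine ⟨e, Finset.mem_insert_of_mem (Finset.mem_erase.mpr ⟨?_, heF⟩), hue⟩
      rintro rfl
      rcases Sym2.mem_iff.mp hue with rfl | rfl
      · exact huw rfl
      · exact huz rfl

lemma near_k_le_card {Γ : SimpleGraph W} {k : ℕ} {x y : W} {F : Finset (Sym2 W)}
    (hkcard : 2 * k + 2 ≤ Fintype.card W) (hN : Near Γ x y F) (hyx : y ≠ x) :
    k ≤ F.card := by
  have := hN.card_eq hyx; omega

lemma avail_count {k : ℕ} {F F₀ : Finset (Sym2 W)} {Z : Finset W}
    (hkF : k ≤ F.card)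
    (htouch : F.filter (fun e => ¬ ∀ u ∈ e, u ∉ Z) ⊆ F₀) (hF₀k : F₀.card ≤ k) :
    k - F₀.card ≤ (F.filter (fun e => ∀ u ∈ e, u ∉ Z)).card := by
  classical
  have hsplit := Finset.card_filter_add_card_filter_not
    (s := F) (p := fun e => ∀ u ∈ e, u ∉ Z)
  have h2 : (F.filter (fun e => ¬ ∀ u ∈ e, u ∉ Z)).card ≤ F₀.card :=
    Finset.card_le_card htouch
  omega

lemma Wset_subset_NB {Γ : SimpleGraph W} {k : ℕ} {x : W} (hext : Γ.IsKExtendable k)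
    (hkcard : 2 * k + 2 ≤ Fintype.card W) (hAk : (NB Γ x).card ≤ k) :
    WsetF Γ x ⊆ NB Γ x := by
  classical
  intro y hy
  by_contra hyA
  obtain ⟨hyx, F, hN⟩ := mem_WsetF.mp hy
  set A := NB Γ x with hAdef
  set F₀ := F.filter (fun e => ∃ a ∈ A, a ∈ e) with hF₀def
  have hF₀sub : F₀ ⊆ F := Finset.filter_subset _ _
  have hF₀ : IsMSet Γ F₀ := hN.1.subset hF₀sub
  have hxF : x ∉ msupp F := fun h => (hN.mem_supp.mp h).1 rfl
  have hAcov : ∀ a ∈ A, a ∈ msupp F₀ := by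
    intro a ha
    have hax : a ≠ x := (mem_NB.mp ha).ne'
    have hay : a ≠ y := fun h => hyA (h ▸ ha)
    have ham : a ∈ msupp F := hN.mem_supp.mpr ⟨hax, hay⟩
    obtain ⟨e, he, hae⟩ := mem_msupp.mp ham
    exact mem_msupp.mpr ⟨e, Finset.mem_filter.mpr ⟨he, a, ha, hae⟩, hae⟩
  have hF₀card : F₀.card ≤ A.card := by
    apply Finset.card_le_card_of_injOn (fun e => if h : ∃ a ∈ A, a ∈ e then h.choose else x)
    · intro e he
      have h := (Finset.mem_filter.mp he).2
      dsimp only; rw [dif_pos h]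
      exact h.choose_spec.1
    · intro e he f hf hef
      have he' := (Finset.mem_filter.mp (Finset.mem_coe.mp he)).2
      have hf' := (Finset.mem_filter.mp (Finset.mem_coe.mp hf)).2
      simp only at hef
      rw [dif_pos he', dif_pos hf'] at hef
      have h2 : he'.choose ∈ f := by rw [hef]; exact hf'.choose_spec.2
      exact hN.1.eq_of_mem (Finset.mem_filter.mp (Finset.mem_coe.mp he)).1
        (Finset.mem_filter.mp (Finset.mem_coe.mp hf)).1 he'.choose_spec.2 h2
  set Z := msupp F₀ ∪ {x, y} with hZdef
  have htouch : F.filter (fun e => ¬ ∀ u ∈ e, u ∉ Z) ⊆ F₀ := by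
    intro e he
    rw [Finset.mem_filter] at he
    obtain ⟨he1, he2⟩ := he
    push_neg at he2
    obtain ⟨u, hue, huZ⟩ := he2
    rcases Finset.mem_union.mp huZ with h | h
    · obtain ⟨f, hf, huf⟩ := mem_msupp.mp h
      rwa [hN.1.eq_of_mem he1 (hF₀sub hf) hue huf]
    · exfalso
      have hmem := hN.mem_supp.mp (mem_msupp.mpr ⟨e, he1, hue⟩)
      rcases Finset.mem_insert.mp h with rfl | h'
      · exact hmem.1 rfl
      · exact hmem.2 (Finset.mem_singleton.mp h')
  have havail : k - F₀.card ≤ (F.filter (fun e => ∀ u ∈ e, u ∉ Z)).card :=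
    avail_count (near_k_le_card hkcard hN hyx) htouch (le_trans hF₀card hAk)
  obtain ⟨Fk, hFk, hFkcard, hFksub, hFkZ⟩ :=
    pad (k := k) hF₀ hN.1 Finset.subset_union_left (le_trans hF₀card hAk) havail
  refine trap hext hFk hFkcard (z := x) ?_ ?_
  · intro hxk
    exact hxF (msupp_mono hF₀sub (hFkZ x hxk (Finset.mem_union_right _ (by simp))))
  · intro w hw
    exact msupp_mono hFksub (hAcov w (mem_NB.mpr hw))

lemma DB {Γ : SimpleGraph W} {x y : W} {F : Finset (Sym2 W)}
    (hyW : y ∈ WsetF Γ x) (hN : Near Γ x y F) :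
    ((NB Γ y).erase x).card + 1 ≤ (WsetF Γ x).card := by
  classical
  obtain ⟨hyx, -⟩ := mem_WsetF.mp hyW
  have hinj : ((NB Γ y).erase x).card ≤ ((WsetF Γ x).erase y).card := by
    apply Finset.card_le_card_of_injOn (pmate F)
    · intro w hw
      obtain ⟨hwx, hwA⟩ := Finset.mem_erase.mp hw
      have hadj : Γ.Adj y w := mem_NB.mp hwA
      obtain ⟨hflip, hpx, hpy⟩ := near_flip hN hyx hadj hwx
      exact Finset.mem_erase.mpr ⟨hpy, mem_WsetF.mpr ⟨hpx, _, hflip⟩⟩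
    · intro w hw w' hw' heq
      have hwm : w ∈ msupp F := hN.mem_supp.mpr
        ⟨(Finset.mem_erase.mp (Finset.mem_coe.mp hw)).1,
         (mem_NB.mp (Finset.mem_erase.mp (Finset.mem_coe.mp hw)).2).ne'⟩
      have hwm' : w' ∈ msupp F := hN.mem_supp.mpr
        ⟨(Finset.mem_erase.mp (Finset.mem_coe.mp hw')).1,
         (mem_NB.mp (Finset.mem_erase.mp (Finset.mem_coe.mp hw')).2).ne'⟩
      exact pmate_inj hN.1 hwm hwm' heq
  have hycard : ((WsetF Γ x).erase y).card + 1 = (WsetF Γ x).card :=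
    Finset.card_erase_add_one hyW
  omega

lemma stepR {Γ : SimpleGraph W} {k : ℕ} {x y a : W} {F : Finset (Sym2 W)}
    (hext : Γ.IsKExtendable k) (hkcard : 2 * k + 2 ≤ Fintype.card W)
    (hAk : (NB Γ x).card ≤ k) (hyW : y ∈ WsetF Γ x) (hN : Near Γ x y F)
    (haA : a ∈ NB Γ x) (hay : a ≠ y) : pmate F a ∈ NB Γ y := by
  classical
  by_contra hℓ
  obtain ⟨hyx, -⟩ := mem_WsetF.mp hyW
  have hax : a ≠ x := (mem_NB.mp haA).ne'
  have ham : a ∈ msupp F := hN.mem_supp.mpr ⟨hax, hay⟩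
  set ℓ := pmate F a with hℓdef
  have hℓm : ℓ ∈ msupp F := pmate_mem ham
  have hℓx : ℓ ≠ x := (hN.mem_supp.mp hℓm).1
  have hℓy : ℓ ≠ y := (hN.mem_supp.mp hℓm).2
  have hedge : s(a, ℓ) ∈ F := pmate_spec ham
  have hxF : x ∉ msupp F := fun h => (hN.mem_supp.mp h).1 rfl
  have hyF : y ∉ msupp F := fun h => (hN.mem_supp.mp h).2 rfl
  set E' := F.filter (fun e => (∃ w ∈ (NB Γ y).erase x, w ∈ e) ∧ e ≠ s(a, ℓ)) with hE'def
  have hE'sub : E' ⊆ F := Finset.filter_subset _ _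
  set F₀ := insert s(x, a) E' with hF₀def
  have hxa_notmem : s(x, a) ∉ E' := fun h => hxF (mem_msupp.mpr ⟨_, hE'sub h, by simp⟩)
  have hF₀mset : IsMSet Γ F₀ := by
    constructor
    · intro e he
      rcases Finset.mem_insert.mp he with rfl | h
      · exact (SimpleGraph.mem_edgeSet Γ).mpr (mem_NB.mp haA)
      · exact hN.1.1 e (hE'sub h)
    · intro e he f hf hne u hue huf
      rcases Finset.mem_insert.mp he with rfl | he' <;>
        rcases Finset.mem_insert.mp hf with rfl | hf'
      · exact absurd rfl hne
      · rcases Sym2.mem_iff.mp hue with rfl | rfl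
        · exact hxF (mem_msupp.mpr ⟨f, hE'sub hf', huf⟩)
        · have h2 := hN.1.edge_eq (hE'sub hf') huf
          rw [← hℓdef] at h2
          exact (Finset.mem_filter.mp hf').2.2 h2
      · rcases Sym2.mem_iff.mp huf with rfl | rfl
        · exact hxF (mem_msupp.mpr ⟨e, hE'sub he', hue⟩)
        · have h2 := hN.1.edge_eq (hE'sub he') hue
          rw [← hℓdef] at h2
          exact (Finset.mem_filter.mp he').2.2 h2
      · exact hN.1.2 e (hE'sub he') f (hE'sub hf') hne u hue huf
  have hcov : ∀ w ∈ NB Γ y, w ∈ msupp F₀ := by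
    intro w hw
    have hadj := mem_NB.mp hw
    have hwy : w ≠ y := hadj.ne'
    by_cases hwx : w = x
    · exact mem_msupp.mpr ⟨s(x, a), Finset.mem_insert_self _ _, by simp [hwx]⟩
    by_cases hwa : w = a
    · exact mem_msupp.mpr ⟨s(x, a), Finset.mem_insert_self _ _, by simp [hwa]⟩
    · have hwm : w ∈ msupp F := hN.mem_supp.mpr ⟨hwx, hwy⟩
      obtain ⟨e, heF, hwe⟩ := mem_msupp.mp hwm
      have hne : e ≠ s(a, ℓ) := by
        rintro rfl
        rcases Sym2.mem_iff.mp hwe with rfl | rfl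
        · exact hwa rfl
        · exact hℓ hw
      exact mem_msupp.mpr ⟨e, Finset.mem_insert_of_mem (Finset.mem_filter.mpr
        ⟨heF, ⟨w, Finset.mem_erase.mpr ⟨hwx, hw⟩, hwe⟩, hne⟩), hwe⟩
  have hE'card : E'.card ≤ ((NB Γ y).erase x).card := by
    apply Finset.card_le_card_of_injOn
      (fun e => if h : ∃ w ∈ (NB Γ y).erase x, w ∈ e then h.choose else x)
    · intro e he
      have h := (Finset.mem_filter.mp he).2.1
      dsimp only; rw [dif_pos h]
      exact h.choose_spec.1
    · intro e he f hf hef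
      have he' := (Finset.mem_filter.mp (Finset.mem_coe.mp he)).2.1
      have hf' := (Finset.mem_filter.mp (Finset.mem_coe.mp hf)).2.1
      simp only at hef
      rw [dif_pos he', dif_pos hf'] at hef
      have h2 : he'.choose ∈ f := by rw [hef]; exact hf'.choose_spec.2
      exact hN.1.eq_of_mem (hE'sub (Finset.mem_coe.mp he))
        (hE'sub (Finset.mem_coe.mp hf)) he'.choose_spec.2 h2
  have hF₀card : F₀.card = E'.card + 1 := Finset.card_insert_of_notMem hxa_notmem
  have hF₀k : F₀.card ≤ k := by
    have hdb := DB hyW hN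
    have hwA : (WsetF Γ x).card ≤ (NB Γ x).card :=
      Finset.card_le_card (Wset_subset_NB hext hkcard hAk)
    omega
  have hyF₀ : y ∉ msupp F₀ := by
    intro h
    rcases mem_msupp.mp h with ⟨e, he, hye⟩
    rcases Finset.mem_insert.mp he with rfl | h'
    · rcases Sym2.mem_iff.mp hye with rfl | rfl
      · exact hyx rfl
      · exact hay rfl
    · exact hyF (mem_msupp.mpr ⟨e, hE'sub h', hye⟩)
  set Z := msupp F₀ ∪ {y} with hZdef
  set T := insert s(a, ℓ) E' with hTdef
  have hTcard : T.card ≤ F₀.card := by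
    have : s(a, ℓ) ∉ E' := fun h => (Finset.mem_filter.mp h).2.2 rfl
    rw [hTdef, Finset.card_insert_of_notMem this, hF₀card]
  have htouch : F.filter (fun e => ¬ ∀ u ∈ e, u ∉ Z) ⊆ T := by
    intro e he
    rw [Finset.mem_filter] at he
    obtain ⟨he1, he2⟩ := he
    push_neg at he2
    obtain ⟨u, hue, huZ⟩ := he2
    have humF : u ∈ msupp F := mem_msupp.mpr ⟨e, he1, hue⟩
    rcases Finset.mem_union.mp huZ with h | h
    · rcases mem_msupp.mp h with ⟨f, hf, huf⟩
      rcases Finset.mem_insert.mp hf with rfl | hf'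
      · rcases Sym2.mem_iff.mp huf with rfl | rfl
        · exact absurd humF hxF
        · have h2 := hN.1.edge_eq he1 hue
          rw [← hℓdef] at h2
          rw [h2]
          exact Finset.mem_insert_self _ _
      · rw [hN.1.eq_of_mem he1 (hE'sub hf') hue huf]
        exact Finset.mem_insert_of_mem hf'
    · rw [Finset.mem_singleton] at h
      exact absurd humF (h ▸ hyF)
  obtain ⟨Fk, hFk, hFkcard, hFksub, hFkZ⟩ :=
    pad (k := k) (Z := Z) hF₀mset hN.1 (by rw [hZdef]; exact Finset.subset_union_left) hF₀k
      (by
        have h2 := avail_count (F₀ := T) (near_k_le_card hkcard hN hyx) htouch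
          (le_trans hTcard hF₀k)
        omega)
  refine trap hext hFk hFkcard (z := y) ?_ ?_
  · intro hyk
    exact hyF₀ (hFkZ y hyk (by rw [hZdef]; exact Finset.mem_union_right _ (by simp)))
  · intro w hw
    exact msupp_mono hFksub (hcov w (mem_NB.mpr hw))

lemma msupp_erase {Γ : SimpleGraph W} {F : Finset (Sym2 W)} (hF : IsMSet Γ F)
    {e : Sym2 W} (he : e ∈ F) {u : W} :
    u ∈ msupp (F.erase e) ↔ u ∈ msupp F ∧ u ∉ e := by
  constructor
  · rintro h
    obtain ⟨f, hf, huf⟩ := mem_msupp.mp h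
    have hfF : f ∈ F := Finset.erase_subset _ _ hf
    refine ⟨mem_msupp.mpr ⟨f, hfF, huf⟩, fun hue => ?_⟩
    exact (Finset.ne_of_mem_erase hf) (hF.eq_of_mem hfF he huf hue)
  · rintro ⟨h, hue⟩
    obtain ⟨f, hf, huf⟩ := mem_msupp.mp h
    refine mem_msupp.mpr ⟨f, Finset.mem_erase.mpr ⟨fun hfe => hue (hfe ▸ huf), hf⟩, huf⟩

lemma stepEQ {Γ : SimpleGraph W} {k : ℕ} {x y : W} {F : Finset (Sym2 W)}
    (hext : Γ.IsKExtendable k) (hkcard : 2 * k + 2 ≤ Fintype.card W)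
    (hAk : (NB Γ x).card ≤ k) (hyW : y ∈ WsetF Γ x) (hN : Near Γ x y F) :
    (NB Γ y).erase x = ((NB Γ x).erase y).image (pmate F) := by
  classical
  obtain ⟨hyx, -⟩ := mem_WsetF.mp hyW
  have hyA : y ∈ NB Γ x := Wset_subset_NB hext hkcard hAk hyW
  have hmsup : ∀ a ∈ (NB Γ x).erase y, a ∈ msupp F := by
    intro a ha
    obtain ⟨hay, haA⟩ := Finset.mem_erase.mp ha
    exact hN.mem_supp.mpr ⟨(mem_NB.mp haA).ne', hay⟩
  have himg : ((NB Γ x).erase y).image (pmate F) ⊆ (NB Γ y).erase x := by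
    intro b hb
    obtain ⟨a, ha, rfl⟩ := Finset.mem_image.mp hb
    obtain ⟨hay, haA⟩ := Finset.mem_erase.mp ha
    have hmem : pmate F a ∈ NB Γ y := stepR hext hkcard hAk hyW hN haA hay
    exact Finset.mem_erase.mpr ⟨(hN.mem_supp.mp (pmate_mem (hmsup a ha))).1, hmem⟩
  have hcard1 : (((NB Γ x).erase y).image (pmate F)).card = ((NB Γ x).erase y).card := by
    apply Finset.card_image_of_injOn
    intro a ha a' ha' heq
    exact pmate_inj hN.1 (hmsup a (Finset.mem_coe.mp ha)) (hmsup a' (Finset.mem_coe.mp ha')) heq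
  have hcard2 : ((NB Γ y).erase x).card ≤ ((NB Γ x).erase y).card := by
    have hdb := DB hyW hN
    have hW : (WsetF Γ x).card ≤ (NB Γ x).card :=
      Finset.card_le_card (Wset_subset_NB hext hkcard hAk)
    have hye : ((NB Γ x).erase y).card + 1 = (NB Γ x).card := Finset.card_erase_add_one hyA
    omega
  exact (Finset.eq_of_subset_of_card_le himg (by omega)).symm

lemma A_subset_Wset {Γ : SimpleGraph W} {k : ℕ} {x y : W} {F : Finset (Sym2 W)}
    (hext : Γ.IsKExtendable k) (hkcard : 2 * k + 2 ≤ Fintype.card W)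
    (hAk : (NB Γ x).card ≤ k) (hyW : y ∈ WsetF Γ x) (hN : Near Γ x y F) :
    (NB Γ x).erase y ⊆ WsetF Γ x := by
  intro a ha
  obtain ⟨hay, haA⟩ := Finset.mem_erase.mp ha
  obtain ⟨hyx, -⟩ := mem_WsetF.mp hyW
  have ham : a ∈ msupp F := hN.mem_supp.mpr ⟨(mem_NB.mp haA).ne', hay⟩
  have hw : pmate F a ∈ NB Γ y := stepR hext hkcard hAk hyW hN haA hay
  have hwx : pmate F a ≠ x := (hN.mem_supp.mp (pmate_mem ham)).1
  obtain ⟨hflip, hpx, hpy⟩ := near_flip hN hyx (mem_NB.mp hw) hwx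
  rw [pmate_invol hN.1 ham] at hflip hpx
  exact mem_WsetF.mpr ⟨hpx, _, hflip⟩

lemma closureA {Γ : SimpleGraph W} {k : ℕ} {x u' : W} {Fx : Finset (Sym2 W)}
    (hext : Γ.IsKExtendable k) (hkcard : 2 * k + 2 ≤ Fintype.card W)
    (hAk : (NB Γ x).card ≤ k) (hu'W : u' ∈ WsetF Γ x) (hNx : Near Γ x u' Fx)
    {u : W} (hu : u ∈ (NB Γ x).erase u') :
    (NB Γ u).erase x ⊆ insert u' (((NB Γ x).erase u').image (pmate Fx)) := by
  classical
  obtain ⟨hu'x, -⟩ := mem_WsetF.mp hu'W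
  obtain ⟨huu', huA⟩ := Finset.mem_erase.mp hu
  have hum : u ∈ msupp Fx := hNx.mem_supp.mpr ⟨(mem_NB.mp huA).ne', huu'⟩
  have hbNu' : pmate Fx u ∈ NB Γ u' := stepR hext hkcard hAk hu'W hNx huA huu'
  set b := pmate Fx u with hbdef
  have hbm : b ∈ msupp Fx := pmate_mem hum
  have hbx : b ≠ x := (hNx.mem_supp.mp hbm).1
  obtain ⟨hflip, -, -⟩ := near_flip hNx hu'x (mem_NB.mp hbNu') hbx
  have hinvol : pmate Fx b = u := by rw [hbdef]; exact pmate_invol hNx.1 hum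
  rw [hinvol] at hflip
  have huW : u ∈ WsetF Γ x := mem_WsetF.mpr ⟨(mem_NB.mp huA).ne', _, hflip⟩
  have hEQ := stepEQ hext hkcard hAk huW hflip
  rw [hEQ]
  intro z hz
  obtain ⟨c, hc, rfl⟩ := Finset.mem_image.mp hz
  obtain ⟨hcu, hcA⟩ := Finset.mem_erase.mp hc
  by_cases hcu' : c = u'
  · have hp : pmate (insert s(u', b) (Fx.erase s(b, u))) c = b := by
      rw [hcu']; exact pmate_eq hflip.1 (Finset.mem_insert_self _ _)
    rw [hp]
    exact Finset.mem_insert_of_mem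
      (Finset.mem_image.mpr ⟨u, Finset.mem_erase.mpr ⟨huu', huA⟩, hbdef.symm⟩)
  by_cases hcb : c = b
  · have hp : pmate (insert s(u', b) (Fx.erase s(b, u))) c = u' := by
      rw [hcb]
      apply pmate_eq hflip.1
      rw [show s(b, u') = s(u', b) from Sym2.eq_swap]
      exact Finset.mem_insert_self _ _
    rw [hp]
    exact Finset.mem_insert_self _ _
  · have hcm : c ∈ msupp Fx := hNx.mem_supp.mpr ⟨(mem_NB.mp hcA).ne', hcu'⟩
    have hce : s(c, pmate Fx c) ∈ Fx := pmate_spec hcm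
    have hce' : s(c, pmate Fx c) ∈ insert s(u', b) (Fx.erase s(b, u)) := by
      refine Finset.mem_insert_of_mem (Finset.mem_erase.mpr ⟨?_, hce⟩)
      intro h
      have hcmem : c ∈ s(b, u) := by rw [← h]; simp
      rcases Sym2.mem_iff.mp hcmem with rfl | rfl
      · exact hcb rfl
      · exact hcu rfl
    have hp : pmate (insert s(u', b) (Fx.erase s(b, u))) c = pmate Fx c :=
      pmate_eq hflip.1 hce'
    rw [hp]
    exact Finset.mem_insert_of_mem
      (Finset.mem_image.mpr ⟨c, Finset.mem_erase.mpr ⟨hcu', hcA⟩, rfl⟩)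

lemma step8 {Γ : SimpleGraph W} {k : ℕ} {x u' : W} {Fx : Finset (Sym2 W)}
    (hext : Γ.IsKExtendable k) (hkcard : 2 * k + 2 ≤ Fintype.card W)
    (hAk : (NB Γ x).card ≤ k) (hu'W : u' ∈ WsetF Γ x) (hNx : Near Γ x u' Fx)
    (hu'A : u' ∈ NB Γ x)
    {b₁ w₁ : W} (hb₁B : b₁ ∈ ((NB Γ x).erase u').image (pmate Fx)) (hb₁A : b₁ ∉ NB Γ x)
    (hadj : Γ.Adj b₁ w₁) (hw₁x : w₁ ≠ x) (hw₁A : w₁ ∉ NB Γ x)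
    (hw₁B : w₁ ∉ ((NB Γ x).erase u').image (pmate Fx)) : False := by
  classical
  obtain ⟨hu'x, -⟩ := mem_WsetF.mp hu'W
  have hxFx : x ∉ msupp Fx := fun h => (hNx.mem_supp.mp h).1 rfl
  have hu'Fx : u' ∉ msupp Fx := fun h => (hNx.mem_supp.mp h).2 rfl
  obtain ⟨a₁, ha₁, hpa₁⟩ := Finset.mem_image.mp hb₁B
  obtain ⟨ha₁u', ha₁A⟩ := Finset.mem_erase.mp ha₁
  have ha₁x : a₁ ≠ x := (mem_NB.mp ha₁A).ne'
  have ha₁m : a₁ ∈ msupp Fx := hNx.mem_supp.mpr ⟨ha₁x, ha₁u'⟩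
  have hb₁m : b₁ ∈ msupp Fx := hpa₁ ▸ pmate_mem ha₁m
  have hb₁x : b₁ ≠ x := (hNx.mem_supp.mp hb₁m).1
  have hb₁u' : b₁ ≠ u' := (hNx.mem_supp.mp hb₁m).2
  have hpb₁ : pmate Fx b₁ = a₁ := by rw [← hpa₁]; exact pmate_invol hNx.1 ha₁m
  have hb₁a₁ : b₁ ≠ a₁ := by rw [← hpa₁]; exact pmate_ne hNx.1 ha₁m
  have hw₁u' : w₁ ≠ u' := fun h => hw₁A (h ▸ hu'A)
  have hw₁b₁ : w₁ ≠ b₁ := hadj.ne'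
  have hw₁m : w₁ ∈ msupp Fx := hNx.mem_supp.mpr ⟨hw₁x, hw₁u'⟩
  have hw₁a₁ : w₁ ≠ a₁ := fun h => hw₁A (h ▸ ha₁A)
  set w₂ := pmate Fx w₁ with hw₂def
  have hw₂m : w₂ ∈ msupp Fx := pmate_mem hw₁m
  have hpw₂ : pmate Fx w₂ = w₁ := by rw [hw₂def]; exact pmate_invol hNx.1 hw₁m
  have hw₂A : w₂ ∉ NB Γ x := by
    intro h
    have hw₂u' : w₂ ≠ u' := (hNx.mem_supp.mp hw₂m).2
    exact hw₁B (Finset.mem_image.mpr ⟨w₂, Finset.mem_erase.mpr ⟨hw₂u', h⟩, hpw₂⟩)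
  set D' := ((NB Γ x).erase u').erase a₁ with hD'def
  set E₂ := Fx.filter (fun e => ∃ c ∈ D', c ∈ e) with hE₂def
  have hE₂sub : E₂ ⊆ Fx := Finset.filter_subset _ _
  have hmsuppE₂ : ∀ z, z ∈ msupp E₂ → z ∈ D' ∨ pmate Fx z ∈ D' := by
    intro z hz
    obtain ⟨e, he, hze⟩ := mem_msupp.mp hz
    have heFx : e ∈ Fx := hE₂sub he
    obtain ⟨c, hc, hce⟩ := (Finset.mem_filter.mp he).2
    have heq := hNx.1.edge_eq heFx hze
    rw [heq] at hce
    rcases Sym2.mem_iff.mp hce with h | h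
    · left; exact h ▸ hc
    · right; exact h ▸ hc
  have hmemD' : ∀ z, z ∈ D' → z ∈ NB Γ x := fun z hz =>
    (Finset.mem_erase.mp (Finset.mem_erase.mp hz).2).2
  have ha₁D' : a₁ ∉ D' := fun h => (Finset.mem_erase.mp h).1 rfl
  have hb₁D' : b₁ ∉ D' := fun h => hb₁A (hmemD' _ h)
  have hw₁D' : w₁ ∉ D' := fun h => hw₁A (hmemD' _ h)
  have hw₂D' : w₂ ∉ D' := fun h => hw₂A (hmemD' _ h)
  have ha₁E₂ : a₁ ∉ msupp E₂ := by
    intro h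
    rcases hmsuppE₂ a₁ h with h' | h'
    · exact ha₁D' h'
    · rw [hpa₁] at h'; exact hb₁D' h'
  have hb₁E₂ : b₁ ∉ msupp E₂ := by
    intro h
    rcases hmsuppE₂ b₁ h with h' | h'
    · exact hb₁D' h'
    · rw [hpb₁] at h'; exact ha₁D' h'
  have hw₁E₂ : w₁ ∉ msupp E₂ := by
    intro h
    rcases hmsuppE₂ w₁ h with h' | h'
    · exact hw₁D' h'
    · rw [← hw₂def] at h'; exact hw₂D' h'
  have hE₂Fx : ∀ z, z ∈ msupp E₂ → z ∈ msupp Fx := fun z h => msupp_mono hE₂sub h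
  set F₀ := insert s(x, u') (insert s(b₁, w₁) E₂) with hF₀def
  have hxu'adj : Γ.Adj x u' := mem_NB.mp hu'A
  have hmF₀ : IsMSet Γ F₀ := by
    constructor
    · intro e he
      rcases Finset.mem_insert.mp he with rfl | he
      · exact hxu'adj
      rcases Finset.mem_insert.mp he with rfl | he
      · exact hadj
      · exact hNx.1.1 e (hE₂sub he)
    · intro e he f hf hne z hze hzf
      have keyxu : ∀ g, g ∈ insert s(b₁, w₁) E₂ → ∀ v, v ∈ s(x, u') → v ∉ g := by
        intro g hg v hv hvg
        rcases Finset.mem_insert.mp hg with rfl | hg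
        · rcases Sym2.mem_iff.mp hv with rfl | rfl <;> rcases Sym2.mem_iff.mp hvg with h | h
          exacts [hb₁x h.symm, hw₁x h.symm, hb₁u' h.symm, hw₁u' h.symm]
        · rcases Sym2.mem_iff.mp hv with rfl | rfl
          · exact hxFx (hE₂Fx _ (mem_msupp.mpr ⟨g, hg, hvg⟩))
          · exact hu'Fx (hE₂Fx _ (mem_msupp.mpr ⟨g, hg, hvg⟩))
      have keybw : ∀ g, g ∈ E₂ → ∀ v, v ∈ s(b₁, w₁) → v ∉ g := by
        intro g hg v hv hvg
        rcases Sym2.mem_iff.mp hv with rfl | rfl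
        · exact hb₁E₂ (mem_msupp.mpr ⟨g, hg, hvg⟩)
        · exact hw₁E₂ (mem_msupp.mpr ⟨g, hg, hvg⟩)
      rcases Finset.mem_insert.mp he with rfl | he' <;>
        rcases Finset.mem_insert.mp hf with rfl | hf'
      · exact absurd rfl hne
      · exact keyxu f hf' z hze hzf
      · exact keyxu e he' z hzf hze
      · rcases Finset.mem_insert.mp he' with rfl | he'' <;>
          rcases Finset.mem_insert.mp hf' with rfl | hf''
        · exact absurd rfl hne
        · exact keybw f hf'' z hze hzf
        · exact keybw e he'' z hzf hze
        · exact hNx.1.2 e (hE₂sub he'') f (hE₂sub hf'') hne z hze hzf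
  have hb₁Nu' : b₁ ∈ NB Γ u' := by
    have hEQ := stepEQ hext hkcard hAk hu'W hNx
    rw [← hEQ] at hb₁B
    exact (Finset.mem_erase.mp hb₁B).2
  obtain ⟨hflip, -, -⟩ := near_flip hNx hu'x (mem_NB.mp hb₁Nu') hb₁x
  rw [hpb₁] at hflip
  set Fa := insert s(u', b₁) (Fx.erase s(b₁, a₁)) with hFadef
  have ha₁W : a₁ ∈ WsetF Γ x := mem_WsetF.mpr ⟨ha₁x, _, hflip⟩
  have hEQa := stepEQ hext hkcard hAk ha₁W hflip
  have hcov : ∀ z ∈ NB Γ a₁, z ∈ msupp F₀ := by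
    intro z hzN
    by_cases hzx : z = x
    · exact mem_msupp.mpr ⟨s(x, u'), Finset.mem_insert_self _ _, by simp [hzx]⟩
    · have hz' : z ∈ (NB Γ a₁).erase x := Finset.mem_erase.mpr ⟨hzx, hzN⟩
      rw [hEQa] at hz'
      obtain ⟨c, hc, rfl⟩ := Finset.mem_image.mp hz'
      obtain ⟨hca₁, hcA⟩ := Finset.mem_erase.mp hc
      by_cases hcu' : c = u'
      · have hp : pmate Fa c = b₁ := by
          rw [hcu']; exact pmate_eq hflip.1 (Finset.mem_insert_self _ _)
        rw [hp]
        exact mem_msupp.mpr ⟨s(b₁, w₁),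
          Finset.mem_insert_of_mem (Finset.mem_insert_self _ _), by simp⟩
      · have hcm : c ∈ msupp Fx := hNx.mem_supp.mpr ⟨(mem_NB.mp hcA).ne', hcu'⟩
        have hcb₁ : c ≠ b₁ := fun h => hb₁A (h ▸ hcA)
        have hce : s(c, pmate Fx c) ∈ Fa := by
          refine Finset.mem_insert_of_mem (Finset.mem_erase.mpr ⟨?_, pmate_spec hcm⟩)
          intro h
          have hcmem : c ∈ s(b₁, a₁) := by rw [← h]; simp
          rcases Sym2.mem_iff.mp hcmem with rfl | rfl
          · exact hcb₁ rfl
          · exact hca₁ rfl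
        have hp : pmate Fa c = pmate Fx c := pmate_eq hflip.1 hce
        rw [hp]
        have hcD' : c ∈ D' := Finset.mem_erase.mpr ⟨hca₁, Finset.mem_erase.mpr ⟨hcu', hcA⟩⟩
        have hmemE₂ : s(c, pmate Fx c) ∈ E₂ :=
          Finset.mem_filter.mpr ⟨pmate_spec hcm, c, hcD', by simp⟩
        exact mem_msupp.mpr ⟨_, Finset.mem_insert_of_mem (Finset.mem_insert_of_mem hmemE₂),
          by simp⟩
  have ha₁F₀ : a₁ ∉ msupp F₀ := by
    intro h
    rcases mem_msupp.mp h with ⟨e, he, hae⟩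
    rcases Finset.mem_insert.mp he with rfl | he
    · rcases Sym2.mem_iff.mp hae with h' | h'
      exacts [ha₁x h', ha₁u' h']
    rcases Finset.mem_insert.mp he with rfl | he
    · rcases Sym2.mem_iff.mp hae with h' | h'
      exacts [hb₁a₁ h'.symm, hw₁a₁ h'.symm]
    · exact ha₁E₂ (mem_msupp.mpr ⟨e, he, hae⟩)
  have hE₂card : E₂.card ≤ D'.card := by
    apply Finset.card_le_card_of_injOn (fun e => if h : ∃ c ∈ D', c ∈ e then h.choose else x)
    · intro e he
      have h := (Finset.mem_filter.mp he).2
      dsimp only; rw [dif_pos h]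
      exact h.choose_spec.1
    · intro e he f hf hef
      have he' := (Finset.mem_filter.mp (Finset.mem_coe.mp he)).2
      have hf' := (Finset.mem_filter.mp (Finset.mem_coe.mp hf)).2
      simp only at hef
      rw [dif_pos he', dif_pos hf'] at hef
      have h2 : he'.choose ∈ f := by rw [hef]; exact hf'.choose_spec.2
      exact hNx.1.eq_of_mem (hE₂sub (Finset.mem_coe.mp he)) (hE₂sub (Finset.mem_coe.mp hf))
        he'.choose_spec.2 h2
  have hD'card : D'.card + 1 = ((NB Γ x).erase u').card :=
    Finset.card_erase_add_one (Finset.mem_erase.mpr ⟨ha₁u', ha₁A⟩)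
  have herase : ((NB Γ x).erase u').card + 1 = (NB Γ x).card :=
    Finset.card_erase_add_one hu'A
  have hsbw : s(b₁, w₁) ∉ E₂ := fun h => hb₁E₂ (mem_msupp.mpr ⟨_, h, by simp⟩)
  have hsxu : s(x, u') ∉ insert s(b₁, w₁) E₂ := by
    intro h
    rcases Finset.mem_insert.mp h with h | h
    · have hx : x ∈ s(b₁, w₁) := by rw [← h]; simp
      rcases Sym2.mem_iff.mp hx with rfl | rfl
      exacts [hb₁x rfl, hw₁x rfl]
    · exact hxFx (hE₂Fx _ (mem_msupp.mpr ⟨_, h, by simp⟩))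
  have hF₀card : F₀.card = E₂.card + 2 := by
    rw [hF₀def, Finset.card_insert_of_notMem hsxu, Finset.card_insert_of_notMem hsbw]
  have hF₀k : F₀.card ≤ k := by omega
  set T := insert s(a₁, b₁) (insert s(w₁, w₂) E₂) with hTdef
  have hTcard : T.card ≤ F₀.card := by
    have h1 : T.card ≤ (insert s(w₁, w₂) E₂).card + 1 := by
      rw [hTdef]; exact Finset.card_insert_le _ _
    have h2 := Finset.card_insert_le s(w₁, w₂) E₂
    omega
  set Z := msupp F₀ ∪ {a₁} with hZdef
  have htouch : Fx.filter (fun e => ¬ ∀ z ∈ e, z ∉ Z) ⊆ T := by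
    intro e he
    rw [Finset.mem_filter] at he
    obtain ⟨he1, he2⟩ := he
    push_neg at he2
    obtain ⟨z, hze, hzZ⟩ := he2
    have hzm : z ∈ msupp Fx := mem_msupp.mpr ⟨e, he1, hze⟩
    have heq := hNx.1.edge_eq he1 hze
    rcases Finset.mem_union.mp hzZ with h | h
    · rcases mem_msupp.mp h with ⟨f, hf, hzf⟩
      rcases Finset.mem_insert.mp hf with rfl | hf
      · exfalso
        rcases Sym2.mem_iff.mp hzf with rfl | rfl
        exacts [hxFx hzm, hu'Fx hzm]
      rcases Finset.mem_insert.mp hf with rfl | hf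
      · rcases Sym2.mem_iff.mp hzf with rfl | rfl
        · rw [heq, hpb₁, show s(z, a₁) = s(a₁, z) from Sym2.eq_swap]
          exact Finset.mem_insert_self _ _
        · rw [heq, ← hw₂def]
          exact Finset.mem_insert_of_mem (Finset.mem_insert_self _ _)
      · have hef := hNx.1.eq_of_mem he1 (hE₂sub hf) hze hzf
        rw [hef]
        exact Finset.mem_insert_of_mem (Finset.mem_insert_of_mem hf)
    · rw [Finset.mem_singleton] at h
      rw [h] at heq
      rw [heq, hpa₁]
      exact Finset.mem_insert_self _ _
  obtain ⟨Fk, hFk, hFkcard, hFksub, hFkZ⟩ :=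
    pad (k := k) (Z := Z) hmF₀ hNx.1 (by rw [hZdef]; exact Finset.subset_union_left) hF₀k
      (by
        have h2 := avail_count (F₀ := T) (near_k_le_card hkcard hNx hu'x) htouch
          (le_trans hTcard hF₀k)
        omega)
  refine trap hext hFk hFkcard (z := a₁) ?_ ?_
  · intro h
    exact ha₁F₀ (hFkZ a₁ h (by rw [hZdef]; exact Finset.mem_union_right _ (by simp)))
  · intro z hz
    exact msupp_mono hFksub (hcov z (mem_NB.mpr hz))

omit [Fintype W] [DecidableEq W] in
lemma walk_closure {Γ : SimpleGraph W} {Q : Finset W}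
    (hQ : ∀ u ∈ Q, ∀ v, Γ.Adj u v → v ∈ Q) {u v : W} (p : Γ.Walk u v) (hu : u ∈ Q) :
    v ∈ Q := by
  induction p with
  | nil => exact hu
  | cons h p ih => exact ih (hQ _ hu _ h)

/-- Main abstract lemma: in a `k`-extendable graph on at least `2k+2` vertices,
a vertex of degree at most `k` has its connected component inside an explicit set
of at most twice-its-degree vertices. -/
theorem TP {Γ : SimpleGraph W} {k : ℕ} (hkcard : 2 * k + 2 ≤ Fintype.card W)
    (hext : Γ.IsKExtendable k) (x : W) (hAk : (NB Γ x).card ≤ k) :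
    ∃ Q : Finset W, Q.card ≤ 2 * (NB Γ x).card ∧ ∀ u, Γ.Reachable x u → u ∈ Q := by
  classical
  obtain ⟨Fpm, hFpm, hFpmsupp⟩ := exists_pm_finset hext
  have hxsup : x ∈ msupp Fpm := by rw [hFpmsupp]; exact Finset.mem_univ x
  set u' := pmate Fpm x with hu'def
  have hu'x : u' ≠ x := pmate_ne hFpm hxsup
  have hadjxu' : Γ.Adj x u' := pmate_adj hFpm hxsup
  have hu'A : u' ∈ NB Γ x := mem_NB.mpr hadjxu'
  have hedge : s(x, u') ∈ Fpm := pmate_spec hxsup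
  set Fx := Fpm.erase s(x, u') with hFxdef
  have hNx : Near Γ x u' Fx := by
    refine ⟨hFpm.subset (Finset.erase_subset _ _), ?_⟩
    ext z
    rw [hFxdef, msupp_erase hFpm hedge, hFpmsupp]
    simp only [Finset.mem_univ, true_and, Finset.mem_sdiff, Finset.mem_insert,
      Finset.mem_singleton, Sym2.mem_iff]
  have hu'W : u' ∈ WsetF Γ x := mem_WsetF.mpr ⟨hu'x, Fx, hNx⟩
  set B₀ := ((NB Γ x).erase u').image (pmate Fx) with hB₀def
  have hB₀ : (NB Γ u').erase x = B₀ := stepEQ hext hkcard hAk hu'W hNx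
  set Q := insert x (NB Γ x ∪ B₀) with hQdef
  have hxQ : x ∈ Q := Finset.mem_insert_self _ _
  have hcard : Q.card ≤ 2 * (NB Γ x).card := by
    have h1 : Q.card ≤ (NB Γ x ∪ B₀).card + 1 := by
      rw [hQdef]; exact Finset.card_insert_le _ _
    have h2 : (NB Γ x ∪ B₀).card ≤ (NB Γ x).card + B₀.card := Finset.card_union_le _ _
    have h3 : B₀.card ≤ ((NB Γ x).erase u').card := by
      rw [hB₀def]; exact Finset.card_image_le
    have h4 : ((NB Γ x).erase u').card + 1 = (NB Γ x).card :=
      Finset.card_erase_add_one hu'A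
    omega
  refine ⟨Q, hcard, ?_⟩
  have hclos : ∀ u ∈ Q, ∀ v, Γ.Adj u v → v ∈ Q := by
    intro u hu v hv
    by_cases hvx : v = x
    · rw [hvx]; exact hxQ
    by_cases hux : u = x
    · exact Finset.mem_insert_of_mem (Finset.mem_union_left _ (mem_NB.mpr (by
        rw [← hux]; exact hv)))
    by_cases huA : u ∈ NB Γ x
    · by_cases huu' : u = u'
      · have hmem : v ∈ (NB Γ u').erase x :=
          Finset.mem_erase.mpr ⟨hvx, mem_NB.mpr (by rw [← huu']; exact hv)⟩
        rw [hB₀] at hmem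
        exact Finset.mem_insert_of_mem (Finset.mem_union_right _ hmem)
      · have hmem := closureA hext hkcard hAk hu'W hNx
          (Finset.mem_erase.mpr ⟨huu', huA⟩)
          (Finset.mem_erase.mpr ⟨hvx, mem_NB.mpr hv⟩)
        rcases Finset.mem_insert.mp hmem with h | h
        · rw [h]; exact Finset.mem_insert_of_mem (Finset.mem_union_left _ hu'A)
        · exact Finset.mem_insert_of_mem (Finset.mem_union_right _ h)
    · have huB : u ∈ B₀ := by
        rcases Finset.mem_insert.mp hu with h | h
        · exact absurd h hux
        rcases Finset.mem_union.mp h with h | h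
        · exact absurd h huA
        · exact h
      by_contra hvQ
      refine step8 hext hkcard hAk hu'W hNx hu'A huB huA hv hvx ?_ ?_
      · intro h
        exact hvQ (Finset.mem_insert_of_mem (Finset.mem_union_left _ h))
      · intro h
        exact hvQ (Finset.mem_insert_of_mem (Finset.mem_union_right _ h))
  intro u hru
  obtain ⟨p⟩ := hru
  exact walk_closure hclos p hxQ

section Main

variable {V : Type*} [Fintype V] [DecidableEq V]

lemma mem_cSet {S : Finset V} {y : V} : y ∈ ((Sᶜ : Finset V) : Set V) ↔ y ∉ S := by simp

open scoped Classical in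
noncomputable def CS (G : SimpleGraph V) (v : V) (S : Finset V) : Finset V :=
  univ.filter (fun y => ∃ (hv : v ∈ ((Sᶜ : Finset V) : Set V))
    (hy : y ∈ ((Sᶜ : Finset V) : Set V)),
    (G.induce ((Sᶜ : Finset V) : Set V)).Reachable ⟨v, hv⟩ ⟨y, hy⟩)

lemma mem_CS {G : SimpleGraph V} {v : V} {S : Finset V} {y : V} :
    y ∈ CS G v S ↔ ∃ (hv : v ∈ ((Sᶜ : Finset V) : Set V))
      (hy : y ∈ ((Sᶜ : Finset V) : Set V)),
      (G.induce ((Sᶜ : Finset V) : Set V)).Reachable ⟨v, hv⟩ ⟨y, hy⟩ := by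
  simp [CS]

lemma CS_not_mem_S {G : SimpleGraph V} {v : V} {S : Finset V} {y : V}
    (hy : y ∈ CS G v S) : y ∉ S := by
  obtain ⟨-, hy', -⟩ := mem_CS.mp hy
  exact mem_cSet.mp hy'

lemma mem_CS_self {G : SimpleGraph V} {v : V} {S : Finset V} (hv : v ∉ S) :
    v ∈ CS G v S :=
  mem_CS.mpr ⟨mem_cSet.mpr hv, mem_cSet.mpr hv, SimpleGraph.Reachable.refl _⟩

lemma CS_closure {G : SimpleGraph V} {v : V} {S : Finset V} {y w : V}
    (hy : y ∈ CS G v S) (hadj : G.Adj y w) (hw : w ∉ S) : w ∈ CS G v S := by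
  obtain ⟨hv, hy', hr⟩ := mem_CS.mp hy
  refine mem_CS.mpr ⟨hv, mem_cSet.mpr hw, hr.trans (SimpleGraph.Adj.reachable ?_)⟩
  exact hadj

lemma CS_card_le {G : SimpleGraph V} [DecidableRel G.Adj] {v : V} {S : Finset V} {k n : ℕ}
    (hS : S ⊆ G.neighborFinset v) (hScard : S.card = n)
    (hext : (G.induce ((Sᶜ : Finset V) : Set V)).IsKExtendable k)
    (hcard : n + 2 * k + 2 ≤ Fintype.card V)
    (hdk : G.degree v - n ≤ k) :
    (CS G v S).card ≤ 2 * (G.degree v - n) := by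
  classical
  have hvS : v ∉ S := fun h => G.irrefl (SimpleGraph.mem_neighborFinset G v v |>.mp (hS h))
  have hWcard : Fintype.card ↥((Sᶜ : Finset V) : Set V) = Fintype.card V - n := by
    have h2 := Set.ncard_coe_finset (Sᶜ : Finset V)
    rw [← Nat.card_coe_set_eq, Nat.card_eq_fintype_card] at h2
    rw [h2, Finset.card_compl, hScard]
  have hNBcard : (NB (G.induce ((Sᶜ : Finset V) : Set V)) ⟨v, mem_cSet.mpr hvS⟩).card
      = G.degree v - n := by
    have hbij : (NB (G.induce ((Sᶜ : Finset V) : Set V)) ⟨v, mem_cSet.mpr hvS⟩).card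
        = (G.neighborFinset v \ S).card := by
      refine Finset.card_bij (fun y _ => (y : V)) ?_ ?_ ?_
      · intro y hy
        have hadj := mem_NB.mp hy
        exact Finset.mem_sdiff.mpr ⟨(G.mem_neighborFinset v (y : V)).mpr hadj,
          mem_cSet.mp y.2⟩
      · intro y _ y' _ h
        exact Subtype.ext h
      · intro w hw
        obtain ⟨hw1, hw2⟩ := Finset.mem_sdiff.mp hw
        exact ⟨⟨w, mem_cSet.mpr hw2⟩,
          mem_NB.mpr ((G.mem_neighborFinset v w).mp hw1), rfl⟩
    rw [hbij, Finset.card_sdiff_of_subset hS, hScard]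
    rfl
  obtain ⟨Q, hQcard, hQreach⟩ := TP (Γ := G.induce ((Sᶜ : Finset V) : Set V))
    (by omega) hext ⟨v, mem_cSet.mpr hvS⟩ (by omega)
  have hsub : CS G v S ⊆ Q.image Subtype.val := by
    intro y hy
    obtain ⟨hv, hy', hr⟩ := mem_CS.mp hy
    exact Finset.mem_image.mpr ⟨⟨y, hy'⟩, hQreach _ hr, rfl⟩
  calc (CS G v S).card ≤ (Q.image Subtype.val).card := Finset.card_le_card hsub
    _ ≤ Q.card := Finset.card_image_le
    _ ≤ 2 * (NB (G.induce ((Sᶜ : Finset V) : Set V)) ⟨v, mem_cSet.mpr hvS⟩).card := hQcard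
    _ = 2 * (G.degree v - n) := by rw [hNBcard]

end Main

end NK

theorem nkGraph_minDegree {V : Type*} [Fintype V] [DecidableEq V]
    (G : SimpleGraph V) [DecidableRel G.Adj] (n k : ℕ) (hk : 1 ≤ k)
    (hconn : G.Connected) (h : G.IsNKGraph n k) :
    n + k + 1 ≤ G.minDegree := by
  classical
  open NK in
  obtain ⟨hcard, hpar, hext⟩ := h
  by_contra hlt
  push_neg at hlt
  have hpos : 0 < Fintype.card V := by omega
  haveI : Nonempty V := Fintype.card_pos_iff.mp hpos
  obtain ⟨v, hv⟩ := G.exists_minimal_degree_vertex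
  have hdmin : ∀ w, G.degree v ≤ G.degree w := fun w => hv ▸ G.minDegree_le_degree w
  have hdnk : G.degree v ≤ n + k := by
    have h2 : G.degree v < n + k + 1 := hv ▸ hlt
    omega
  by_cases hdn : G.degree v ≤ n
  · -- Case 1: delete all neighbours of v
    have hsub : G.neighborFinset v ⊆ Finset.univ.erase v := by
      intro w hw
      exact Finset.mem_erase.mpr ⟨((G.mem_neighborFinset v w).mp hw).ne', Finset.mem_univ w⟩
    have hle1 : (G.neighborFinset v).card ≤ n := hdn
    have hle2 : n ≤ (Finset.univ.erase v).card := by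
      have h2 : (Finset.univ.erase v).card + 1 = Fintype.card V := by
        rw [Finset.card_erase_add_one (Finset.mem_univ v), Finset.card_univ]
      omega
    obtain ⟨S, hS1, hS2, hScard⟩ := Finset.exists_subsuperset_card_eq hsub hle1 hle2
    have hvS : v ∉ S := fun hh => (Finset.mem_erase.mp (hS2 hh)).1 rfl
    obtain ⟨M, hM⟩ := (hext S hScard).1
    obtain ⟨w, hw, -⟩ := hM.1 (hM.2 ⟨v, NK.mem_cSet.mpr hvS⟩)
    have hadj : G.Adj v (w : V) := M.adj_sub hw
    exact absurd (hS1 ((G.mem_neighborFinset v (w : V)).mpr hadj)) (NK.mem_cSet.mp w.2)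
  · -- Case 2
    push_neg at hdn
    have ht1 : 1 ≤ G.degree v - n := by omega
    have htk : G.degree v - n ≤ k := by omega
    obtain ⟨S₀, hS₀sub, hS₀card⟩ :=
      Finset.exists_subset_card_eq (s := G.neighborFinset v) (n := n)
        (by show n ≤ G.degree v; omega)
    set 𝒮 := Finset.univ.filter
      (fun S : Finset V => S ⊆ G.neighborFinset v ∧ S.card = n) with h𝒮
    have h𝒮ne : 𝒮.Nonempty := ⟨S₀, by simp [h𝒮, hS₀sub, hS₀card]⟩
    obtain ⟨S, hS𝒮, hSmax⟩ := Finset.exists_max_image 𝒮 (fun S => (NK.CS G v S).card) h𝒮ne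
    have hSprop : S ⊆ G.neighborFinset v ∧ S.card = n := by
      have := Finset.mem_filter.mp hS𝒮
      exact this.2
    obtain ⟨hSsub, hScard⟩ := hSprop
    have hvS : v ∉ S := fun hh => G.irrefl ((G.mem_neighborFinset v v).mp (hSsub hh))
    have hvC : v ∈ NK.CS G v S := NK.mem_CS_self hvS
    have hCcard : (NK.CS G v S).card ≤ 2 * (G.degree v - n) :=
      NK.CS_card_le hSsub hScard (hext S hScard) hcard htk
    have hCS : ∀ y ∈ NK.CS G v S, y ∉ S := fun y hy => NK.CS_not_mem_S hy
    have hnbC : ∀ y ∈ NK.CS G v S, (G.neighborFinset y \ S) ⊆ NK.CS G v S := by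
      intro y hy w hw
      obtain ⟨hw1, hw2⟩ := Finset.mem_sdiff.mp hw
      exact NK.CS_closure hy ((G.mem_neighborFinset y w).mp hw1) hw2
    have hnbcard : ∀ y : V, G.degree v - n ≤ (G.neighborFinset y \ S).card := by
      intro y
      have h1 : G.degree v ≤ (G.neighborFinset y).card := hdmin y
      have h2 := Finset.le_card_sdiff S (G.neighborFinset y)
      omega
    have hA : (G.neighborFinset v \ S).Nonempty := by
      rw [← Finset.card_pos]
      have := hnbcard v
      omega
    obtain ⟨a, ha⟩ := hA
    obtain ⟨haN, haS⟩ := Finset.mem_sdiff.mp ha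
    have haC : a ∈ NK.CS G v S := hnbC v hvC (Finset.mem_sdiff.mpr ⟨haN, haS⟩)
    have hav : a ≠ v := fun hh => G.irrefl ((G.mem_neighborFinset v v).mp (hh ▸ haN))
    have hswap : ∀ s ∈ S, ∀ w, G.Adj s w → w ∈ NK.CS G v S ∪ S := by
      intro s hsS w hadjsw
      set S₂ := insert a (S.erase s) with hS₂def
      have hsa : s ≠ a := fun hh => haS (hh ▸ hsS)
      have hS₂sub : S₂ ⊆ G.neighborFinset v := by
        intro z hz
        rcases Finset.mem_insert.mp hz with rfl | hz
        · exact haN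
        · exact hSsub (Finset.erase_subset _ _ hz)
      have hS₂card : S₂.card = n := by
        have h1 : a ∉ S.erase s := fun hh => haS (Finset.erase_subset _ _ hh)
        have h2 := Finset.card_erase_add_one hsS
        rw [hS₂def, Finset.card_insert_of_notMem h1]
        omega
      have hS₂𝒮 : S₂ ∈ 𝒮 := Finset.mem_filter.mpr ⟨Finset.mem_univ _, hS₂sub, hS₂card⟩
      have hvS₂ : v ∉ S₂ := by
        intro hh
        rcases Finset.mem_insert.mp hh with hh | hh
        · exact hav hh.symm
        · exact hvS (Finset.erase_subset _ _ hh)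
      have hsubC : ∀ y ∈ (NK.CS G v S).erase a, y ∈ NK.CS G v S₂ := by
        intro y hy
        obtain ⟨hya, hyC⟩ := Finset.mem_erase.mp hy
        have hynotS₂ : y ∉ S₂ := by
          intro hh
          rcases Finset.mem_insert.mp hh with hh | hh
          · exact hya hh
          · exact hCS y hyC (Finset.erase_subset _ _ hh)
        by_cases hyv : y = v
        · rw [hyv]; exact NK.mem_CS_self hvS₂
        by_cases hadjvy : G.Adj v y
        · exact NK.CS_closure (NK.mem_CS_self hvS₂) hadjvy hynotS₂
        · -- common neighbour of v and y avoiding a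
          have hPyC : (G.neighborFinset y \ S).erase a ⊆
              (((NK.CS G v S).erase a).erase v).erase y := by
            intro z hz
            obtain ⟨hza, hzin⟩ := Finset.mem_erase.mp hz
            have hzC : z ∈ NK.CS G v S := hnbC y hyC hzin
            have hadjyz : G.Adj y z :=
              (G.mem_neighborFinset y z).mp (Finset.mem_sdiff.mp hzin).1
            refine Finset.mem_erase.mpr ⟨hadjyz.ne', Finset.mem_erase.mpr
              ⟨?_, Finset.mem_erase.mpr ⟨hza, hzC⟩⟩⟩
            intro hh
            exact hadjvy (by rw [← hh]; exact hadjyz.symm)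
          have hPvC : (G.neighborFinset v \ S).erase a ⊆
              (((NK.CS G v S).erase a).erase v).erase y := by
            intro z hz
            obtain ⟨hza, hzin⟩ := Finset.mem_erase.mp hz
            have hzC : z ∈ NK.CS G v S := hnbC v hvC hzin
            have hadjvz : G.Adj v z :=
              (G.mem_neighborFinset v z).mp (Finset.mem_sdiff.mp hzin).1
            refine Finset.mem_erase.mpr ⟨?_, Finset.mem_erase.mpr
              ⟨hadjvz.ne', Finset.mem_erase.mpr ⟨hza, hzC⟩⟩⟩
            intro hh
            exact hadjvy (hh ▸ hadjvz)
          have hPycard : G.degree v - n - 1 ≤ ((G.neighborFinset y \ S).erase a).card := by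
            have h1 := hnbcard y
            have h2 := Finset.pred_card_le_card_erase (s := G.neighborFinset y \ S) (a := a)
            omega
          have hPvcard : G.degree v - n - 1 ≤ ((G.neighborFinset v \ S).erase a).card := by
            have h1 := hnbcard v
            have h2 := Finset.pred_card_le_card_erase (s := G.neighborFinset v \ S) (a := a)
            omega
          have hD3 : ((((NK.CS G v S).erase a).erase v).erase y).card + 3
              = (NK.CS G v S).card := by
            have h1 : v ∈ (NK.CS G v S).erase a := Finset.mem_erase.mpr ⟨fun hh => hav hh.symm, hvC⟩
            have h2 : y ∈ ((NK.CS G v S).erase a).erase v :=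
              Finset.mem_erase.mpr ⟨hyv, hy⟩
            have e1 := Finset.card_erase_add_one haC
            have e2 := Finset.card_erase_add_one h1
            have e3 := Finset.card_erase_add_one h2
            omega
          have hinter : ¬ Disjoint ((G.neighborFinset y \ S).erase a)
              ((G.neighborFinset v \ S).erase a) := by
            intro hdisj
            have hcup : ((G.neighborFinset y \ S).erase a ∪ (G.neighborFinset v \ S).erase a).card
                = ((G.neighborFinset y \ S).erase a).card
                  + ((G.neighborFinset v \ S).erase a).card :=
              Finset.card_union_of_disjoint hdisj
            have hsubD : ((G.neighborFinset y \ S).erase a ∪ (G.neighborFinset v \ S).erase a)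
                ⊆ (((NK.CS G v S).erase a).erase v).erase y :=
              Finset.union_subset hPyC hPvC
            have hle := Finset.card_le_card hsubD
            omega
          obtain ⟨z, hzPy, hzPv⟩ := Finset.not_disjoint_iff.mp hinter
          have hadjvz : G.Adj v z :=
            (G.mem_neighborFinset v z).mp (Finset.mem_sdiff.mp (Finset.mem_erase.mp hzPv).2).1
          have hadjzy : G.Adj z y :=
            ((G.mem_neighborFinset y z).mp (Finset.mem_sdiff.mp (Finset.mem_erase.mp hzPy).2).1).symm
          have hznotS₂ : z ∉ S₂ := by
            intro hh
            rcases Finset.mem_insert.mp hh with hh | hh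
            · exact (Finset.mem_erase.mp hzPv).1 hh
            · exact (Finset.mem_sdiff.mp (Finset.mem_erase.mp hzPv).2).2
                (Finset.erase_subset _ _ hh)
          exact NK.CS_closure (NK.CS_closure (NK.mem_CS_self hvS₂) hadjvz hznotS₂)
            hadjzy hynotS₂
      have hsnotS₂ : s ∉ S₂ := by
        intro hh
        rcases Finset.mem_insert.mp hh with hh | hh
        · exact hsa hh
        · exact Finset.notMem_erase s S hh
      have hsC₂ : s ∈ NK.CS G v S₂ :=
        NK.CS_closure (NK.mem_CS_self hvS₂) ((G.mem_neighborFinset v s).mp (hSsub hsS)) hsnotS₂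
      have hbig : insert s ((NK.CS G v S).erase a) ⊆ NK.CS G v S₂ := by
        intro z hz
        rcases Finset.mem_insert.mp hz with rfl | hz
        · exact hsC₂
        · exact hsubC z hz
      have hnotin : s ∉ (NK.CS G v S).erase a :=
        fun hh => hCS s (Finset.erase_subset _ _ hh) hsS
      have h1 : (insert s ((NK.CS G v S).erase a)).card = (NK.CS G v S).card := by
        rw [Finset.card_insert_of_notMem hnotin]
        exact Finset.card_erase_add_one haC
      have hmax2 : (NK.CS G v S₂).card ≤ (NK.CS G v S).card := hSmax S₂ hS₂𝒮
      have heq : insert s ((NK.CS G v S).erase a) = NK.CS G v S₂ :=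
        Finset.eq_of_subset_of_card_le hbig (by omega)
      by_cases hwS₂ : w ∈ S₂
      · rcases Finset.mem_insert.mp hwS₂ with rfl | hw2
        · exact Finset.mem_union_left _ haC
        · exact Finset.mem_union_right _ (Finset.erase_subset _ _ hw2)
      · have hwC₂ : w ∈ NK.CS G v S₂ := NK.CS_closure hsC₂ hadjsw hwS₂
        rw [← heq] at hwC₂
        rcases Finset.mem_insert.mp hwC₂ with rfl | hw2
        · exact Finset.mem_union_right _ hsS
        · exact Finset.mem_union_left _ (Finset.erase_subset _ _ hw2)
    have hRclos : ∀ u ∈ NK.CS G v S ∪ S, ∀ w, G.Adj u w → w ∈ NK.CS G v S ∪ S := by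
      intro u hu w hadj
      rcases Finset.mem_union.mp hu with hu | hu
      · by_cases hwS : w ∈ S
        · exact Finset.mem_union_right _ hwS
        · exact Finset.mem_union_left _ (NK.CS_closure hu hadj hwS)
      · exact hswap u hu w hadj
    have hall : ∀ z, z ∈ NK.CS G v S ∪ S := by
      intro z
      obtain ⟨p⟩ := hconn.preconnected v z
      exact NK.walk_closure hRclos p (Finset.mem_union_left _ hvC)
    have hbig2 : Fintype.card V ≤ (NK.CS G v S ∪ S).card := by
      rw [← Finset.card_univ]
      exact Finset.card_le_card (fun z _ => hall z)
    have hun := Finset.card_union_le (NK.CS G v S) S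
    omega
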